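/- (Integrality gap for unbounded 2-dimAP+.) There is a constant c > 0 such that for infinitely many positive integers k the following holds. There exist: a finite set V; a set T ⊆ V with |T| = k; an injective map f₀ : T → ℤ²; a symmetric weight function w : V × V → ℝ≥0; and a metric dist on V with dist(x,y) = ‖f₀(x) − f₀(y)‖₂ for all x,y ∈ T and satisfying the 2-dimensional spreading constraints, such that ∑_{{u,v}} w(u,v)·dist(u,v) > 0 and every injective map f : V → ℤ² with f(t) = f₀(t) for all t ∈ T satisfies ∑_{{u,v}} w(u,v)·‖f(u) − f(v)‖₂ ≥ c · k^{1/4} · ∑_{{u,v}} w(u,v)·dist(u,v). In particular, the integrality gap of the spreading LP for unbounded 2-dimAP+ is Ω(k^{1/4}). -/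

import Mathlib

open scoped BigOperators

/-- Euclidean distance between two points of the integer lattice `ℤ²`. -/
noncomputable def eDist2 (p q : ℤ × ℤ) : ℝ :=
  Real.sqrt (((p.1 : ℝ) - (q.1 : ℝ)) ^ 2 + ((p.2 : ℝ) - (q.2 : ℝ)) ^ 2)

/-- `dist` is a metric on `V`. -/
def IsMetric {V : Type*} (dist : V → V → ℝ) : Prop :=
  (∀ x, dist x x = 0) ∧ (∀ x y, 0 ≤ dist x y) ∧ (∀ x y, dist x y = dist y x) ∧
  (∀ x y z, dist x z ≤ dist x y + dist y z) ∧ (∀ x y, dist x y = 0 → x = y)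

/-- An integrality-gap instance for unbounded 2-dimAP+ with `k` terminals and gap
parameter `c·k^(1/4)`: a feasible spreading-LP solution of positive cost such that
every injective layout `f : V → ℤ²` extending `f₀` costs at least
`c · k^(1/4)` times the LP cost. -/
def UnboundedGapInstance (c : ℝ) (k : ℕ) (V : Type) [Fintype V] [DecidableEq V] :
    Prop :=
  ∃ (T : Finset V) (f₀ : {x // x ∈ T} → ℤ × ℤ) (w : V → V → ℝ) (dist : V → V → ℝ),
    T.card = k ∧
    Function.Injective f₀ ∧
    (∀ u v, w u v = w v u) ∧ (∀ u v, 0 ≤ w u v) ∧ (∀ v, w v v = 0) ∧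
    IsMetric dist ∧
    (∀ x y : {x // x ∈ T}, dist x.1 y.1 = eDist2 (f₀ x) (f₀ y)) ∧
    (∀ S : Finset V, ∀ u ∈ S,
      ((S.card : ℝ) - 1) ^ ((3 : ℝ) / 2) / 4 ≤ ∑ v ∈ S, dist u v) ∧
    0 < (∑ u, ∑ v, w u v * dist u v) / 2 ∧
    (∀ f : V → ℤ × ℤ, Function.Injective f →
      (∀ t (ht : t ∈ T), f t = f₀ ⟨t, ht⟩) →
      c * (k : ℝ) ^ ((1 : ℝ) / 4) * ((∑ u, ∑ v, w u v * dist u v) / 2) ≤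
        (∑ u, ∑ v, w u v * eDist2 (f u) (f v)) / 2)


open Finset


def chebN (u q : ℤ × ℤ) : ℕ := max (q.1 - u.1).natAbs (q.2 - u.2).natAbs

lemma chebN_le_iff {u q : ℤ × ℤ} {j : ℕ} :
    chebN u q ≤ j ↔ (u.1 - (j:ℤ) ≤ q.1 ∧ q.1 ≤ u.1 + j) ∧ (u.2 - (j:ℤ) ≤ q.2 ∧ q.2 ≤ u.2 + j) := by
  unfold chebN; rw [max_le_iff]; omega

lemma card_Icc_half (a : ℤ) (j : ℕ) :
    (Finset.Icc (a / 2) ((a + 2 * j) / 2)).card = j + 1 := by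
  rw [show a + 2 * (j:ℤ) = a + (j:ℤ) * 2 by ring, Int.add_mul_ediv_right _ _ (by norm_num : (2:ℤ) ≠ 0)]
  rw [Int.card_Icc]; omega

lemma count_bound (Q : Finset (ℤ × ℤ))
    (hQ : ∀ q ∈ Q, (2 ∣ q.1 ∧ 2 ∣ q.2) ∨ q = (1, 0))
    (u : ℤ × ℤ) (hu : u ∈ Q) (j : ℕ) :
    ((Q.erase u).filter (fun q => chebN u q ≤ j)).card ≤ (j + 1) ^ 2 := by
  classical
  set F := (Q.erase u).filter (fun q => chebN u q ≤ j) with hF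
  have hFQ : ∀ q ∈ F, q ∈ Q ∧ q ≠ u ∧ chebN u q ≤ j := by
    intro q hq
    rw [hF, mem_filter, mem_erase] at hq
    exact ⟨hq.1.2, hq.1.1, hq.2⟩
  rcases hQ u hu with hueven | hphi
  · -- u even
    set E := F.filter (fun q => 2 ∣ q.1 ∧ 2 ∣ q.2) with hE
    have hsub : F ⊆ insert ((1:ℤ), (0:ℤ)) E := by
      intro q hq
      rcases hQ q (hFQ q hq).1 with h | h
      · exact mem_insert_of_mem (by rw [hE, mem_filter]; exact ⟨hq, h⟩)
      · rw [h]; exact mem_insert_self _ _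
    have h1 : F.card ≤ E.card + 1 :=
      le_trans (card_le_card hsub) (card_insert_le _ _)
    have h2 : E.card ≤ (j+1)^2 - 1 := by
      have := Finset.card_le_card_of_injOn (fun q => (q.1 / 2, q.2 / 2))
        (s := E)
        (t := ((Finset.Icc ((u.1 - j) / 2) ((u.1 + j) / 2)) ×ˢ
               (Finset.Icc ((u.2 - j) / 2) ((u.2 + j) / 2))).erase (u.1 / 2, u.2 / 2))
        ?_ ?_
      · refine le_trans this ?_
        rw [Finset.card_erase_of_mem, Finset.card_product]
        · have c1 : (Finset.Icc ((u.1 - j) / 2) ((u.1 + j) / 2)).card = j + 1 := by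
            have := card_Icc_half (u.1 - j) j
            rwa [show u.1 - (j:ℤ) + 2 * j = u.1 + j by ring] at this
          have c2 : (Finset.Icc ((u.2 - j) / 2) ((u.2 + j) / 2)).card = j + 1 := by
            have := card_Icc_half (u.2 - j) j
            rwa [show u.2 - (j:ℤ) + 2 * j = u.2 + j by ring] at this
          rw [c1, c2]; ring_nf; omega
        · rw [Finset.mem_product]
          constructor <;> rw [Finset.mem_Icc] <;>
            exact ⟨Int.ediv_le_ediv (by norm_num) (by omega), Int.ediv_le_ediv (by norm_num) (by omega)⟩
      · intro q hq
        simp only [hE, Finset.mem_coe, mem_filter] at hq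
        obtain ⟨hqF, hq1, hq2⟩ := hq
        obtain ⟨hqQ, hqne, hcheb⟩ := hFQ q hqF
        rw [chebN_le_iff] at hcheb
        rw [Finset.mem_coe, Finset.mem_erase]
        constructor
        · intro hcontra
          apply hqne
          have e1 := congrArg Prod.fst hcontra
          have e2 := congrArg Prod.snd hcontra
          simp only at e1 e2
          obtain ⟨a, ha⟩ := hq1; obtain ⟨b, hb⟩ := hq2
          obtain ⟨a', ha'⟩ := hueven.1; obtain ⟨b', hb'⟩ := hueven.2
          exact Prod.ext (by omega) (by omega)
        · rw [Finset.mem_product, Finset.mem_Icc, Finset.mem_Icc]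
          exact ⟨⟨Int.ediv_le_ediv (by norm_num) hcheb.1.1, Int.ediv_le_ediv (by norm_num) hcheb.1.2⟩,
                 ⟨Int.ediv_le_ediv (by norm_num) hcheb.2.1, Int.ediv_le_ediv (by norm_num) hcheb.2.2⟩⟩
      · intro q hq q' hq' heq
        simp only [hE, Finset.coe_filter, Set.mem_setOf_eq] at hq hq'
        have e1 := congrArg Prod.fst heq
        have e2 := congrArg Prod.snd heq
        simp only at e1 e2
        obtain ⟨a, ha⟩ := hq.2.1; obtain ⟨b, hb⟩ := hq.2.2
        obtain ⟨a', ha'⟩ := hq'.2.1; obtain ⟨b', hb'⟩ := hq'.2.2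
        exact Prod.ext (by omega) (by omega)
    have h3 : 0 < (j+1)^2 := by positivity
    omega
  · -- u = (1,0)
    have hall : ∀ q ∈ F, 2 ∣ q.1 ∧ 2 ∣ q.2 := by
      intro q hq
      rcases hQ q (hFQ q hq).1 with h | h
      · exact h
      · exact absurd (h.trans hphi.symm) (hFQ q hq).2.1
    have := Finset.card_le_card_of_injOn (fun q => (q.1 / 2, q.2 / 2))
      (s := F)
      (t := (Finset.Icc ((u.1 - j) / 2) ((u.1 + j) / 2)) ×ˢ
            (Finset.Icc ((u.2 - j) / 2) ((u.2 + j) / 2))) ?_ ?_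
    · refine le_trans this ?_
      rw [Finset.card_product]
      have c1 : (Finset.Icc ((u.1 - j) / 2) ((u.1 + j) / 2)).card = j + 1 := by
        have := card_Icc_half (u.1 - j) j
        rwa [show u.1 - (j:ℤ) + 2 * j = u.1 + j by ring] at this
      have c2 : (Finset.Icc ((u.2 - j) / 2) ((u.2 + j) / 2)).card = j + 1 := by
        have := card_Icc_half (u.2 - j) j
        rwa [show u.2 - (j:ℤ) + 2 * j = u.2 + j by ring] at this
      rw [c1, c2]; ring_nf; exact le_rfl
    · intro q hq
      have hcheb := (hFQ q hq).2.2
      rw [chebN_le_iff] at hcheb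
      rw [Finset.mem_coe, Finset.mem_product, Finset.mem_Icc, Finset.mem_Icc]
      exact ⟨⟨Int.ediv_le_ediv (by norm_num) hcheb.1.1, Int.ediv_le_ediv (by norm_num) hcheb.1.2⟩,
             ⟨Int.ediv_le_ediv (by norm_num) hcheb.2.1, Int.ediv_le_ediv (by norm_num) hcheb.2.2⟩⟩
    · intro q hq q' hq' heq
      obtain ⟨d1, d2⟩ := hall q hq
      obtain ⟨d1', d2'⟩ := hall q' hq'
      have e1 := congrArg Prod.fst heq
      have e2 := congrArg Prod.snd heq
      simp only at e1 e2
      obtain ⟨a, ha⟩ := d1; obtain ⟨b, hb⟩ := d2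
      obtain ⟨a', ha'⟩ := d1'; obtain ⟨b', hb'⟩ := d2'
      have : q.1 = q'.1 := by omega
      have : q.2 = q'.2 := by omega
      exact Prod.ext ‹q.1 = q'.1› ‹q.2 = q'.2›

noncomputable def zDist (a b : ℤ × ℤ) : ℝ :=
  Real.sqrt (((b.1 - a.1 : ℤ) : ℝ) ^ 2 + ((b.2 - a.2 : ℤ) : ℝ) ^ 2)

lemma chebN_eq_zero {u q : ℤ × ℤ} : chebN u q = 0 ↔ q = u := by
  constructor
  · intro h
    unfold chebN at h
    exact Prod.ext (by omega) (by omega)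
  · intro h; subst h; simp [chebN]

lemma le_zDist (u q : ℤ × ℤ) : (chebN u q : ℝ) ≤ zDist u q := by
  unfold chebN zDist
  rw [Nat.cast_max]
  have h1 : ((q.1 - u.1).natAbs : ℝ) ≤ Real.sqrt (((q.1 - u.1 : ℤ) : ℝ) ^ 2 + ((q.2 - u.2 : ℤ) : ℝ) ^ 2) := by
    rw [Nat.cast_natAbs, Int.cast_abs, ← Real.sqrt_sq_eq_abs]
    push_cast
    exact Real.sqrt_le_sqrt (by nlinarith [sq_nonneg (((q.2 - u.2 : ℤ)):ℝ)])
  have h2 : ((q.2 - u.2).natAbs : ℝ) ≤ Real.sqrt (((q.1 - u.1 : ℤ) : ℝ) ^ 2 + ((q.2 - u.2 : ℤ) : ℝ) ^ 2) := by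
    rw [Nat.cast_natAbs, Int.cast_abs, ← Real.sqrt_sq_eq_abs]
    push_cast
    exact Real.sqrt_le_sqrt (by nlinarith [sq_nonneg (((q.1 - u.1 : ℤ)):ℝ)])
  exact max_le h1 h2

lemma layer (Q' : Finset (ℤ × ℤ)) (f : ℤ × ℤ → ℕ) (J : ℕ) :
    ∑ j ∈ range J, ((Q'.filter (fun q => j < f q)).card) ≤ ∑ q ∈ Q', f q := by
  classical
  have h1 : ∑ j ∈ range J, ((Q'.filter (fun q => j < f q)).card)
      = ∑ q ∈ Q', ∑ j ∈ range J, (if j < f q then 1 else 0) := by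
    rw [Finset.sum_comm]
    exact Finset.sum_congr rfl fun j _ => Finset.card_filter _ _
  rw [h1]
  apply Finset.sum_le_sum
  intro q _
  calc ∑ j ∈ range J, (if j < f q then 1 else 0)
      = ((range J).filter (fun j => j < f q)).card := (Finset.card_filter _ _).symm
    _ ≤ (range (f q)).card := Finset.card_le_card (by
        intro j hj
        rw [mem_filter] at hj
        exact mem_range.mpr hj.2)
    _ = f q := Finset.card_range _

lemma sumsq (n : ℕ) : ∑ j ∈ range n, ((j:ℝ)+2)^2 = (2*(n:ℝ)^3 + 9*(n:ℝ)^2 + 13*(n:ℝ))/6 := by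
  induction n with
  | zero => simp
  | succ n ih => rw [Finset.sum_range_succ, ih]; push_cast; ring


lemma anal_main (m : ℕ) (X : ℝ)
    (key : ∀ t : ℕ, (m:ℝ) + t * m - (2*(t:ℝ)^3 + 9*(t:ℝ)^2 + 13*(t:ℝ))/6 ≤ X) :
    ((m:ℝ)) ^ ((3:ℝ)/2) / 2 ≤ X := by
  have hs0 : 0 ≤ Real.sqrt m := Real.sqrt_nonneg _
  have hs2 : Real.sqrt m ^ 2 = (m:ℝ) := Real.sq_sqrt (Nat.cast_nonneg m)
  have h32 : ((m:ℝ))^((3:ℝ)/2) = Real.sqrt m ^ (3:ℕ) := by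
    rw [← Real.rpow_natCast (Real.sqrt m) 3, Real.sqrt_eq_rpow, ← Real.rpow_mul (Nat.cast_nonneg m)]
    norm_num
  rw [h32]
  set s := Real.sqrt m
  rcases le_or_gt m 4 with hm4 | hm4
  · have hk := key 0
    have hmr : (m:ℝ) ≤ 4 := by exact_mod_cast hm4
    have hsle : s ≤ 2 := by nlinarith
    have hineq : s^(3:ℕ)/2 ≤ (m:ℝ) + (0:ℕ) * m - (2*((0:ℕ):ℝ)^3 + 9*((0:ℕ):ℝ)^2 + 13*((0:ℕ):ℝ))/6 := by
      push_cast
      nlinarith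
    linarith
  rcases le_or_gt m 10 with hm10 | hm10
  · have hk := key 1
    have hml : (5:ℝ) ≤ (m:ℝ) := by exact_mod_cast hm4
    have hmu : (m:ℝ) ≤ 10 := by exact_mod_cast hm10
    have hsl : (2.2:ℝ) ≤ s := by nlinarith
    have hsu : s ≤ 3.2 := by nlinarith
    have hineq : s^(3:ℕ)/2 ≤ (m:ℝ) + (1:ℕ) * m - (2*((1:ℕ):ℝ)^3 + 9*((1:ℕ):ℝ)^2 + 13*((1:ℕ):ℝ))/6 := by
      push_cast
      nlinarith [mul_nonneg (mul_nonneg (sub_nonneg.mpr hsl) (sub_nonneg.mpr hsl)) (sub_nonneg.mpr hsu),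
        mul_nonneg (sub_nonneg.mpr hsl) (sub_nonneg.mpr hsu)]
    linarith
  rcases le_or_gt m 24 with hm24 | hm24
  · have hk := key 2
    have hml : (11:ℝ) ≤ (m:ℝ) := by exact_mod_cast hm10
    have hmu : (m:ℝ) ≤ 24 := by exact_mod_cast hm24
    have hsl : (3.3:ℝ) ≤ s := by nlinarith
    have hsu : s ≤ 4.9 := by nlinarith
    have hineq : s^(3:ℕ)/2 ≤ (m:ℝ) + (2:ℕ) * m - (2*((2:ℕ):ℝ)^3 + 9*((2:ℕ):ℝ)^2 + 13*((2:ℕ):ℝ))/6 := by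
      push_cast
      nlinarith [mul_nonneg (mul_nonneg (sub_nonneg.mpr hsl) (sub_nonneg.mpr hsl)) (sub_nonneg.mpr hsu),
        mul_nonneg (sub_nonneg.mpr hsl) (sub_nonneg.mpr hsu)]
    linarith
  · obtain ⟨a, ha1, ha2, ha5⟩ : ∃ a : ℕ, a^2 ≤ m ∧ m < (a+1)^2 ∧ 5 ≤ a := by
      refine ⟨Nat.sqrt m, Nat.sqrt_le' m, by simpa [pow_two] using Nat.lt_succ_sqrt' m, ?_⟩
      have h55 : 5 * 5 ≤ m := by omega
      calc 5 = Nat.sqrt (5*5) := by norm_num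
        _ ≤ Nat.sqrt m := Nat.sqrt_le_sqrt h55
    have hk := key (a - 1)
    have htcast : ((a - 1 : ℕ) : ℝ) = (a:ℝ) - 1 := by
      have h1 : 1 ≤ a := by omega
      push_cast [h1]; ring
    rw [htcast] at hk
    have hA5 : (5:ℝ) ≤ (a:ℝ) := by exact_mod_cast ha5
    have hAs : (a:ℝ) ≤ s := by
      have h1 : ((a:ℝ))^2 ≤ (m:ℝ) := by exact_mod_cast ha1
      exact (Real.le_sqrt (by positivity) (Nat.cast_nonneg m)).mpr h1
    have hsA1 : s ≤ (a:ℝ) + 1 := by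
      have h1 : (m:ℝ) ≤ ((a:ℝ)+1)^2 := by
        have : (m:ℝ) < (((a:ℕ):ℝ)+1)^2 := by exact_mod_cast ha2
        linarith
      exact Real.sqrt_le_iff.mpr ⟨by positivity, h1⟩
    have hineq : s^(3:ℕ)/2 ≤ (m:ℝ) + ((a:ℝ) - 1) * m - (2*((a:ℝ)-1)^3 + 9*((a:ℝ)-1)^2 + 13*((a:ℝ)-1))/6 := by
      rw [← hs2]
      nlinarith [mul_nonneg (sub_nonneg.mpr hAs) (sub_nonneg.mpr hsA1),
        mul_nonneg (mul_nonneg (sub_nonneg.mpr hAs) (sub_nonneg.mpr hAs)) (sub_nonneg.mpr hsA1),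
        mul_nonneg (mul_nonneg (sub_nonneg.mpr hsA1) (sub_nonneg.mpr hsA1)) (sub_nonneg.mpr hAs),
        mul_nonneg (sub_nonneg.mpr hA5) (mul_nonneg (sub_nonneg.mpr hAs) (sub_nonneg.mpr hsA1)),
        sq_nonneg (s - (a:ℝ)), sq_nonneg ((a:ℝ) - 5)]
    linarith

lemma packing (Q : Finset (ℤ × ℤ))
    (hQ : ∀ q ∈ Q, (2 ∣ q.1 ∧ 2 ∣ q.2) ∨ q = (1, 0))
    (u : ℤ × ℤ) (hu : u ∈ Q) :
    ((Q.card : ℝ) - 1) ^ ((3:ℝ)/2) / 2 ≤ ∑ q ∈ Q, zDist u q := by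
  classical
  set m := Q.card - 1 with hm
  have hcard : Q.card = m + 1 := by
    have : 1 ≤ Q.card := Finset.card_pos.mpr ⟨u, hu⟩
    omega
  set Q' := Q.erase u with hQ'
  have hQ'card : Q'.card = m := by rw [hQ', Finset.card_erase_of_mem hu, hm]
  -- step A
  have hA : ∑ q ∈ Q, zDist u q = ∑ q ∈ Q', zDist u q := by
    rw [hQ']
    rw [← Finset.sum_erase_add Q _ hu]
    simp [zDist]
  -- key bound for all t
  have key : ∀ t : ℕ, (m:ℝ) + t * m - (2*(t:ℝ)^3 + 9*(t:ℝ)^2 + 13*(t:ℝ))/6 ≤ ∑ q ∈ Q, zDist u q := by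
    intro t
    have hlayer := layer Q' (chebN u) (t+1)
    have hstep1 : ∑ q ∈ Q', (chebN u q : ℝ) ≤ ∑ q ∈ Q', zDist u q :=
      Finset.sum_le_sum fun q _ => le_zDist u q
    have hstep2 : ((∑ j ∈ range (t+1), ((Q'.filter (fun q => j < chebN u q)).card) : ℕ) : ℝ)
        ≤ ∑ q ∈ Q', (chebN u q : ℝ) := by
      rw [← Nat.cast_sum]
      exact_mod_cast hlayer
    -- lower bound the layer sum
    have hC : ∀ j : ℕ, (((Q'.filter (fun q => j < chebN u q)).card : ℝ))
        = (m:ℝ) - ((Q'.filter (fun q => chebN u q ≤ j)).card : ℝ) := by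
      intro j
      have h := Finset.card_filter_add_card_filter_not (s := Q') (p := fun q => j < chebN u q)
      simp only [not_lt] at h
      rw [hQ'card] at h
      have := congrArg (fun n : ℕ => (n : ℝ)) h
      push_cast at this
      linarith
    have hC0 : (((Q'.filter (fun q => 0 < chebN u q)).card : ℝ)) = (m:ℝ) := by
      rw [hC 0]
      have : (Q'.filter (fun q => chebN u q ≤ 0)) = ∅ := by
        apply Finset.filter_false_of_mem
        intro q hq
        have hne : q ≠ u := Finset.ne_of_mem_erase hq
        intro hle
        exact hne (chebN_eq_zero.mp (Nat.le_zero.mp hle))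
      rw [this]; simp
    have hBj : ∀ j : ℕ, ((Q'.filter (fun q => chebN u q ≤ j)).card : ℝ) ≤ ((j:ℝ)+1)^2 := by
      intro j
      have := count_bound Q hQ u hu j
      exact_mod_cast this
    have hsum : (m:ℝ) + t * m - (2*(t:ℝ)^3 + 9*(t:ℝ)^2 + 13*(t:ℝ))/6
        ≤ ∑ j ∈ range (t+1), (((Q'.filter (fun q => j < chebN u q)).card : ℝ)) := by
      rw [Finset.sum_range_succ']
      rw [hC0]
      have : ∑ j ∈ range t, (((Q'.filter (fun q => (j+1) < chebN u q)).card : ℝ))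
          ≥ ∑ j ∈ range t, ((m:ℝ) - ((j:ℝ)+2)^2) := by
        apply Finset.sum_le_sum
        intro j _
        rw [hC (j+1)]
        have := hBj (j+1)
        push_cast at this ⊢
        linarith
      have hss : ∑ j ∈ range t, ((m:ℝ) - ((j:ℝ)+2)^2) = t * m - (2*(t:ℝ)^3 + 9*(t:ℝ)^2 + 13*(t:ℝ))/6 := by
        rw [Finset.sum_sub_distrib, sumsq, Finset.sum_const, Finset.card_range, nsmul_eq_mul]
      linarith
    have hcast : ∑ j ∈ range (t+1), (((Q'.filter (fun q => j < chebN u q)).card : ℝ))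
        = ((∑ j ∈ range (t+1), ((Q'.filter (fun q => j < chebN u q)).card) : ℕ) : ℝ) := by
      push_cast; rfl
    rw [hA]
    calc (m:ℝ) + t * m - (2*(t:ℝ)^3 + 9*(t:ℝ)^2 + 13*(t:ℝ))/6
        ≤ ∑ j ∈ range (t+1), (((Q'.filter (fun q => j < chebN u q)).card : ℝ)) := hsum
      _ = _ := hcast
      _ ≤ ∑ q ∈ Q', (chebN u q : ℝ) := hstep2
      _ ≤ ∑ q ∈ Q', zDist u q := hstep1
  have hmc : ((Q.card : ℝ) - 1) = (m:ℝ) := by rw [hcard]; push_cast; ring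
  rw [hmc]
  exact anal_main m _ key

noncomputable def cEmb (a : ℤ × ℤ) : ℂ := ⟨(a.1 : ℝ), (a.2 : ℝ)⟩

lemma zDist_eq_dist (a b : ℤ × ℤ) : zDist a b = dist (cEmb a) (cEmb b) := by
  rw [Complex.dist_eq, Complex.norm_def, Complex.normSq_apply]
  unfold zDist cEmb
  simp only [Complex.sub_re, Complex.sub_im]
  congr 1
  push_cast
  ring

lemma zDist_self (a : ℤ × ℤ) : zDist a a = 0 := by simp [zDist]
lemma zDist_nonneg (a b : ℤ × ℤ) : 0 ≤ zDist a b := Real.sqrt_nonneg _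
lemma zDist_comm (a b : ℤ × ℤ) : zDist a b = zDist b a := by
  unfold zDist; congr 1; push_cast; ring
lemma zDist_triangle (a b c : ℤ × ℤ) : zDist a c ≤ zDist a b + zDist b c := by
  rw [zDist_eq_dist, zDist_eq_dist, zDist_eq_dist]; exact dist_triangle _ _ _
lemma zDist_eq_zero {a b : ℤ × ℤ} (h : zDist a b = 0) : a = b := by
  rw [zDist_eq_dist] at h
  have h2 := dist_eq_zero.mp h
  unfold cEmb at h2
  rw [Complex.ext_iff] at h2
  simp only at h2
  exact Prod.ext (by exact_mod_cast h2.1) (by exact_mod_cast h2.2)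

lemma eDist2_comm (a b : ℤ × ℤ) : eDist2 a b = eDist2 b a := by
  unfold eDist2; congr 1; ring

lemma zDist_double (a b : ℤ × ℤ) : zDist (2*a.1, 2*a.2) (2*b.1, 2*b.2) / 2 = eDist2 a b := by
  unfold zDist eDist2
  rw [show (((2*b.1 - 2*a.1 : ℤ) : ℝ))^2 + (((2*b.2 - 2*a.2 : ℤ) : ℝ))^2
      = 2^2 * ((((a.1:ℝ)) - (b.1:ℝ))^2 + (((a.2:ℝ)) - (b.2:ℝ))^2) by push_cast; ring]
  rw [Real.sqrt_mul (by norm_num : (0:ℝ) ≤ 2^2), Real.sqrt_sq (by norm_num : (0:ℝ) ≤ 2)]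
  ring
noncomputable def Bsq (D : ℕ) : Finset (ℤ × ℤ) := Finset.Icc (-(D:ℤ)) (D:ℤ) ×ˢ Finset.Icc (-(D:ℤ)) (D:ℤ)

abbrev Vt (D : ℕ) := Option {p : ℤ × ℤ // p ∈ Bsq D}

def Gmap (D : ℕ) : Vt D → ℤ × ℤ := fun v => v.elim ((1:ℤ), (0:ℤ)) (fun p => (2*p.1.1, 2*p.1.2))

lemma mem00 (D : ℕ) : ((0:ℤ), (0:ℤ)) ∈ Bsq D := by
  simp only [Bsq, Finset.mem_product, Finset.mem_Icc]
  omega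

def s0 (D : ℕ) : Vt D := some ⟨((0:ℤ), (0:ℤ)), mem00 D⟩

lemma Gmap_inj (D : ℕ) : Function.Injective (Gmap D) := by
  intro u v h
  match u, v with
  | none, none => rfl
  | none, some q =>
    exfalso
    simp only [Gmap, Option.elim] at h
    have h1 := congrArg Prod.fst h
    simp only at h1
    omega
  | some p, none =>
    exfalso
    simp only [Gmap, Option.elim] at h
    have h1 := congrArg Prod.fst h
    simp only at h1
    omega
  | some p, some q =>
    simp only [Gmap, Option.elim] at h
    have h1 := congrArg Prod.fst h
    have h2 := congrArg Prod.snd h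
    simp only at h1 h2
    congr 1
    exact Subtype.ext (Prod.ext (by omega) (by omega))

lemma Gmap_even_or (D : ℕ) : ∀ v : Vt D,
    (2 ∣ (Gmap D v).1 ∧ 2 ∣ (Gmap D v).2) ∨ Gmap D v = (1, 0) := by
  intro v
  match v with
  | none => exact Or.inr rfl
  | some p => exact Or.inl ⟨⟨p.1.1, rfl⟩, ⟨p.1.2, rfl⟩⟩

lemma Gmap_s0 (D : ℕ) : Gmap D (s0 D) = ((0:ℤ), (0:ℤ)) := by
  simp [Gmap, s0, Option.elim]

noncomputable def wt (D : ℕ) : Vt D → Vt D → ℝ := fun u v =>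
  (if u = none ∧ v = s0 D then (1:ℝ) else 0) + (if u = s0 D ∧ v = none then (1:ℝ) else 0)

noncomputable def dt (D : ℕ) : Vt D → Vt D → ℝ := fun u v => zDist (Gmap D u) (Gmap D v) / 2

lemma sumw (D : ℕ) (d : Vt D → Vt D → ℝ) :
    (∑ u : Vt D, ∑ v : Vt D, wt D u v * d u v) = d none (s0 D) + d (s0 D) none := by
  classical
  have hexp : ∀ u v : Vt D, wt D u v * d u v =
      (if u = none then (if v = s0 D then d u v else 0) else 0)
      + (if u = s0 D then (if v = none then d u v else 0) else 0) := by
    intro u v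
    have hne : (s0 D) ≠ (none : Vt D) := by simp [s0]
    unfold wt
    rcases eq_or_ne u none with hu | hu <;> rcases eq_or_ne v none with hv | hv <;>
      rcases eq_or_ne u (s0 D) with hu2 | hu2 <;> rcases eq_or_ne v (s0 D) with hv2 | hv2 <;>
      simp_all <;> ring
  calc ∑ u : Vt D, ∑ v : Vt D, wt D u v * d u v
      = ∑ u : Vt D, ((∑ v : Vt D, (if u = none then (if v = s0 D then d u v else 0) else 0))
        + (∑ v : Vt D, (if u = s0 D then (if v = none then d u v else 0) else 0))) := by
        apply Finset.sum_congr rfl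
        intro u _
        rw [← Finset.sum_add_distrib]
        exact Finset.sum_congr rfl fun v _ => hexp u v
    _ = ∑ u : Vt D, ((if u = none then d u (s0 D) else 0) + (if u = s0 D then d u none else 0)) := by
        apply Finset.sum_congr rfl
        intro u _
        congr 1
        · by_cases h : u = none
          · simp only [h, if_true]
            rw [Finset.sum_ite_eq' Finset.univ (s0 D) (d none)]
            simp
          · simp [h]
        · by_cases h : u = s0 D
          · simp only [h, if_true]
            rw [Finset.sum_ite_eq' Finset.univ (none : Vt D) (d (s0 D))]
            simp
          · simp [h]
    _ = d none (s0 D) + d (s0 D) none := by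
        rw [Finset.sum_add_distrib]
        rw [Finset.sum_ite_eq' Finset.univ (none : Vt D) (fun u => d u (s0 D))]
        rw [Finset.sum_ite_eq' Finset.univ (s0 D) (fun u => d u none)]
        simp

noncomputable def Tt (D : ℕ) : Finset (Vt D) := (Finset.univ : Finset (Vt D)).erase none

lemma Tt_card (D : ℕ) : (Tt D).card = (2*D+1)^2 := by
  unfold Tt
  rw [Finset.card_erase_of_mem (Finset.mem_univ _), Finset.card_univ,
    Fintype.card_option, Fintype.card_coe]
  have hI : (Finset.Icc (-(D:ℤ)) (D:ℤ)).card = 2*D+1 := by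
    rw [Int.card_Icc]; omega
  have hB : (Bsq D).card = (2*D+1) * (2*D+1) := by
    rw [Bsq, Finset.card_product, hI]
  rw [hB, pow_two]
  omega

lemma s0_mem_Tt (D : ℕ) : s0 D ∈ Tt D := by
  unfold Tt
  rw [Finset.mem_erase]
  exact ⟨by simp [s0], Finset.mem_univ _⟩

noncomputable def f0 (D : ℕ) : {x // x ∈ Tt D} → ℤ × ℤ :=
  fun x => x.1.elim ((0:ℤ), (0:ℤ)) Subtype.val

lemma exists_some (D : ℕ) (x : {x // x ∈ Tt D}) : ∃ p, x.1 = some p := by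
  rcases hx : x.1 with _ | p
  · exfalso
    have hmem := x.2
    unfold Tt at hmem
    rw [Finset.mem_erase] at hmem
    exact hmem.1 hx
  · exact ⟨p, rfl⟩

lemma f0_some (D : ℕ) (x : {x // x ∈ Tt D}) (p : {p // p ∈ Bsq D}) (h : x.1 = some p) :
    f0 D x = p.1 := by unfold f0; rw [h]; rfl

lemma f0_inj (D : ℕ) : Function.Injective (f0 D) := by
  intro x y h
  obtain ⟨p, hp⟩ := exists_some D x
  obtain ⟨q, hq⟩ := exists_some D y
  rw [f0_some D x p hp, f0_some D y q hq] at h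
  apply Subtype.ext
  rw [hp, hq]
  exact congrArg some (Subtype.ext h)

lemma dt_eDist2 (D : ℕ) (x y : {x // x ∈ Tt D}) :
    dt D x.1 y.1 = eDist2 (f0 D x) (f0 D y) := by
  obtain ⟨p, hp⟩ := exists_some D x
  obtain ⟨q, hq⟩ := exists_some D y
  rw [f0_some D x p hp, f0_some D y q hq]
  unfold dt
  rw [hp, hq]
  show zDist (Gmap D (some p)) (Gmap D (some q)) / 2 = _
  have h1 : Gmap D (some p) = (2*p.1.1, 2*p.1.2) := rfl
  have h2 : Gmap D (some q) = (2*q.1.1, 2*q.1.2) := rfl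
  rw [h1, h2, zDist_double]

lemma dt_metric (D : ℕ) : IsMetric (dt D) := by
  refine ⟨?_, ?_, ?_, ?_, ?_⟩
  · intro x; simp [dt, zDist_self]
  · intro x y; have := zDist_nonneg (Gmap D x) (Gmap D y); unfold dt; linarith
  · intro x y; unfold dt; rw [zDist_comm]
  · intro x y z
    have := zDist_triangle (Gmap D x) (Gmap D y) (Gmap D z)
    unfold dt; linarith
  · intro x y h
    unfold dt at h
    have : zDist (Gmap D x) (Gmap D y) = 0 := by linarith [zDist_nonneg (Gmap D x) (Gmap D y)]
    exact Gmap_inj D (zDist_eq_zero this)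

lemma dt_spread (D : ℕ) (S : Finset (Vt D)) (u : Vt D) (hu : u ∈ S) :
    ((S.card : ℝ) - 1) ^ ((3:ℝ)/2) / 4 ≤ ∑ v ∈ S, dt D u v := by
  have himg := packing (S.image (Gmap D))
    (by
      intro q hq
      obtain ⟨v, _, rfl⟩ := Finset.mem_image.mp hq
      exact Gmap_even_or D v)
    (Gmap D u) (Finset.mem_image_of_mem _ hu)
  have hcard : (S.image (Gmap D)).card = S.card :=
    Finset.card_image_of_injective _ (Gmap_inj D)
  have hsum : ∑ q ∈ S.image (Gmap D), zDist (Gmap D u) q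
      = ∑ v ∈ S, zDist (Gmap D u) (Gmap D v) :=
    Finset.sum_image (fun x _ y _ h => Gmap_inj D h)
  rw [hcard, hsum] at himg
  unfold dt
  rw [← Finset.sum_div]
  linarith

lemma dt_none_s0 (D : ℕ) : dt D none (s0 D) = 1/2 := by
  unfold dt
  rw [Gmap_s0]
  show zDist (1, 0) (0, 0) / 2 = 1/2
  unfold zDist
  norm_num

lemma dt_s0_none (D : ℕ) : dt D (s0 D) none = 1/2 := by
  unfold dt
  rw [Gmap_s0]
  show zDist (0, 0) (1, 0) / 2 = 1/2
  unfold zDist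
  norm_num

/-- Integrality gap for unbounded 2-dimAP+: there is a constant `c > 0` such that for
infinitely many `k` there is an instance with `k` terminals on which every integral
solution costs at least `c·k^(1/4)` times the LP cost. -/
theorem unbounded_2dimap_plus_integrality_gap :
    ∃ c : ℝ, 0 < c ∧
    ∀ K : ℕ, ∃ k : ℕ, K ≤ k ∧
      ∃ (V : Type) (i1 : Fintype V) (i2 : DecidableEq V),
        @UnboundedGapInstance c k V i1 i2 := by
  classical
  refine ⟨1, one_pos, fun K => ?_⟩
  refine ⟨(2*(K+1)+1)^2, by nlinarith, ?_⟩
  set D : ℕ := K + 1 with hD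
  refine ⟨Vt D, inferInstance, inferInstance, ?_⟩
  refine ⟨Tt D, f0 D, wt D, dt D, Tt_card D, f0_inj D, ?_, ?_, ?_, dt_metric D,
    fun x y => dt_eDist2 D x y, fun S u hu => dt_spread D S u hu, ?_, ?_⟩
  · -- w symm
    intro u v
    unfold wt
    rw [add_comm]
    congr 1
    · exact if_congr and_comm rfl rfl
    · exact if_congr and_comm rfl rfl
  · -- w nonneg
    intro u v; unfold wt; split_ifs <;> norm_num
  · -- w diag
    intro v
    unfold wt
    rcases eq_or_ne v none with rfl | hv
    · simp [s0]
    · simp [hv]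
  · -- LP positive
    rw [sumw D (dt D), dt_none_s0, dt_s0_none]
    norm_num
  · -- integral bound
    intro f hfinj hfext
    rw [sumw D (dt D), dt_none_s0, dt_s0_none,
      sumw D (fun u v => eDist2 (f u) (f v))]
    have hfs0 : f (s0 D) = ((0:ℤ), (0:ℤ)) := by
      have h := hfext (s0 D) (s0_mem_Tt D)
      rw [h]
      rfl
    have hout : f none ∉ Bsq D := by
      intro hmem
      have hmemT : (some ⟨f none, hmem⟩ : Vt D) ∈ Tt D := by
        unfold Tt
        rw [Finset.mem_erase]
        exact ⟨by simp, Finset.mem_univ _⟩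
      have h2 : f (some ⟨f none, hmem⟩) = f none := by
        rw [hfext _ hmemT]
        unfold f0
        rfl
      exact Option.some_ne_none _ (hfinj h2)
    have hp : ¬ (-(D:ℤ) ≤ (f none).1 ∧ (f none).1 ≤ D ∧ -(D:ℤ) ≤ (f none).2 ∧ (f none).2 ≤ D) := by
      intro hcon
      apply hout
      simp only [Bsq, Finset.mem_product, Finset.mem_Icc]
      tauto
    have hxy : ((D:ℤ))+1 ≤ |(f none).1| ∨ ((D:ℤ))+1 ≤ |(f none).2| := by
      rcases le_or_gt ((D:ℤ)+1) (|(f none).1|) with h1 | h1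
      · exact Or.inl h1
      · right
        rw [abs_lt] at h1
        rw [le_abs]
        omega
    have hD1 : ((D:ℝ)) + 1 ≤ eDist2 (f none) ((0:ℤ),(0:ℤ)) := by
      unfold eDist2
      have hsimp : (((f none).1 : ℝ) - (((0:ℤ),(0:ℤ)).1 : ℝ))^2 + (((f none).2 : ℝ) - (((0:ℤ),(0:ℤ)).2 : ℝ))^2
          = (((f none).1 : ℝ))^2 + (((f none).2 : ℝ))^2 := by push_cast; ring
      rw [hsimp]
      rcases hxy with h | h
      · have h1 : ((D:ℝ))+1 ≤ |((f none).1 : ℝ)| := by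
          rw [← Int.cast_abs]
          exact_mod_cast h
        calc ((D:ℝ))+1 ≤ |((f none).1 : ℝ)| := h1
          _ = Real.sqrt ((((f none).1 : ℝ))^2) := (Real.sqrt_sq_eq_abs _).symm
          _ ≤ _ := Real.sqrt_le_sqrt (by nlinarith [sq_nonneg (((f none).2 : ℝ))])
      · have h1 : ((D:ℝ))+1 ≤ |((f none).2 : ℝ)| := by
          rw [← Int.cast_abs]
          exact_mod_cast h
        calc ((D:ℝ))+1 ≤ |((f none).2 : ℝ)| := h1
          _ = Real.sqrt ((((f none).2 : ℝ))^2) := (Real.sqrt_sq_eq_abs _).symm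
          _ ≤ _ := Real.sqrt_le_sqrt (by nlinarith [sq_nonneg (((f none).1 : ℝ))])
    have hk4 : ((((2*D+1)^2 : ℕ)) : ℝ)^((1:ℝ)/4) = Real.sqrt ((2*D+1 : ℕ) : ℝ) := by
      have hx0 : (0:ℝ) ≤ ((2*D+1 : ℕ) : ℝ) := Nat.cast_nonneg _
      rw [Real.sqrt_eq_rpow]
      rw [show ((((2*D+1)^2 : ℕ)) : ℝ) = ((2*D+1 : ℕ) : ℝ) ^ (2:ℕ) by push_cast; ring]
      rw [← Real.rpow_natCast ((2*D+1 : ℕ) : ℝ) 2, ← Real.rpow_mul hx0]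
      norm_num
    have hsle : Real.sqrt ((2*D+1 : ℕ) : ℝ) ≤ 2*((D:ℝ)+1) := by
      rw [Real.sqrt_le_iff]
      constructor
      · positivity
      · push_cast; nlinarith
    have hcomm : eDist2 ((0:ℤ),(0:ℤ)) (f none) = eDist2 (f none) ((0:ℤ),(0:ℤ)) :=
      eDist2_comm _ _
    rw [hfs0]
    rw [hk4, hcomm]
    linarith
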